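/- Integral formula for the commutator with a function of a self-adjoint operator: Let H be a complex Hilbert space, let A, B be bounded linear operators on H with A self-adjoint, and let g : ℝ → ℂ be integrable with ∫_ℝ |g(s)|(1+|s|) ds < ∞. Then, with T := ∫_ℝ g(s) e^{isA} ds (a Bochner integral of bounded operators), one has B∘T − T∘B = i · ∫_ℝ g(s) · e^{isA} ∘ ( ∫₀^s e^{−iuA} ∘ (BA − AB) ∘ e^{iuA} du ) ds. -/

import Mathlib

noncomputable section

open MeasureTheory

/-- `e^{isA}`, the exponential of the bounded operator `isA`. -/
def expUnit {H : Type*} [NormedAddCommGroup H] [InnerProductSpace ℂ H] [CompleteSpace H]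
    (A : H →L[ℂ] H) (s : ℝ) : H →L[ℂ] H :=
  NormedSpace.exp (((s : ℂ) * Complex.I) • A)

section AuxLemmas

variable {H : Type*} [NormedAddCommGroup H] [InnerProductSpace ℂ H] [CompleteSpace H]

instance instNormedAlgebraRatCLM : NormedAlgebra ℚ (H →L[ℂ] H) :=
  NormedAlgebra.restrictScalars ℚ ℂ (H →L[ℂ] H)

lemma expUnit_eq (A : H →L[ℂ] H) (s : ℝ) :
    expUnit A s = NormedSpace.exp (s • (Complex.I • A)) := by
  rw [expUnit]
  congr 1
  rw [mul_smul]
  norm_cast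

lemma expUnit_hasDerivAt (A : H →L[ℂ] H) (s : ℝ) :
    HasDerivAt (fun t : ℝ => expUnit A t) (expUnit A s * (Complex.I • A)) s := by
  simp only [expUnit_eq]
  exact hasDerivAt_exp_smul_const (𝕂 := ℝ) (Complex.I • A) s

lemma expUnit_continuous (A : H →L[ℂ] H) : Continuous (fun t : ℝ => expUnit A t) := by
  simp only [expUnit_eq]
  exact NormedSpace.exp_continuous.comp (continuous_id.smul continuous_const)

lemma expUnit_zero (A : H →L[ℂ] H) : expUnit A 0 = 1 := by
  simp [expUnit, NormedSpace.exp_zero]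

lemma expUnit_add (A : H →L[ℂ] H) (s t : ℝ) :
    expUnit A (s + t) = expUnit A s * expUnit A t := by
  rw [expUnit, expUnit, expUnit, ← NormedSpace.exp_add_of_commute
    (((Commute.refl A).smul_left _).smul_right _)]
  congr 1
  rw [← add_smul]
  push_cast
  ring_nf

lemma expUnit_neg_mul (A : H →L[ℂ] H) (s : ℝ) : expUnit A (-s) * expUnit A s = 1 := by
  rw [← expUnit_add, neg_add_cancel, expUnit_zero]

lemma expUnit_mul_neg (A : H →L[ℂ] H) (s : ℝ) : expUnit A s * expUnit A (-s) = 1 := by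
  rw [← expUnit_add, add_neg_cancel, expUnit_zero]

lemma commute_smul_expUnit (A : H →L[ℂ] H) (s : ℝ) :
    Commute (Complex.I • A) (expUnit A s) := by
  rw [expUnit]
  exact (((Commute.refl A).smul_left _).smul_right _).exp_right

lemma key_comm (A B : H →L[ℂ] H) (s : ℝ) :
    B * expUnit A s - expUnit A s * B =
      Complex.I • (expUnit A s *
        ∫ u in (0:ℝ)..s, expUnit A (-u) * (B * A - A * B) * expUnit A u) := by
  have hderiv : ∀ t : ℝ, HasDerivAt (fun t : ℝ => expUnit A (-t) * B * expUnit A t)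
      (Complex.I • (expUnit A (-t) * (B * A - A * B) * expUnit A t)) t := by
    intro t
    have h1 : HasDerivAt (fun t : ℝ => expUnit A (-t))
        (-(expUnit A (-t) * (Complex.I • A))) t := by
      have h := (expUnit_hasDerivAt A (-t)).scomp t (hasDerivAt_neg t)
      refine h.congr_deriv ?_
      exact neg_one_smul ℝ _
    have h2 := (h1.mul_const B).mul (expUnit_hasDerivAt A t)
    refine h2.congr_deriv ?_
    symm
    have e3 : Complex.I • (expUnit A (-t) * (B * A - A * B) * expUnit A t)
        = expUnit A (-t) * (B * (Complex.I • A) - (Complex.I • A) * B) * expUnit A t := by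
      simp only [mul_smul_comm, smul_mul_assoc, smul_sub, mul_sub, sub_mul]
    have alg : ∀ X Y c' : H →L[ℂ] H, Y * c' = c' * Y →
        X * (B * c' - c' * B) * Y = -(X * c') * B * Y + X * B * (Y * c') := by
      intro X Y c' hY
      rw [hY]
      noncomm_ring
    rw [e3]
    exact alg _ _ _ ((commute_smul_expUnit A t).symm.eq)
  have hcont : Continuous (fun u : ℝ =>
      Complex.I • (expUnit A (-u) * (B * A - A * B) * expUnit A u)) := by
    apply Continuous.fun_const_smul
    exact (((expUnit_continuous A).comp continuous_neg).mul continuous_const).mul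
      (expUnit_continuous A)
  have hFTC := intervalIntegral.integral_eq_sub_of_hasDerivAt
      (f := fun t : ℝ => expUnit A (-t) * B * expUnit A t)
      (fun t _ => hderiv t) (hcont.intervalIntegrable 0 s)
  rw [intervalIntegral.integral_smul] at hFTC
  simp only [neg_zero, expUnit_zero, mul_one, one_mul] at hFTC
  have hmain : expUnit A s *
      (Complex.I • ∫ u in (0:ℝ)..s, expUnit A (-u) * (B * A - A * B) * expUnit A u)
      = B * expUnit A s - expUnit A s * B := by
    rw [hFTC, mul_sub]
    congr 1
    rw [← mul_assoc, ← mul_assoc, expUnit_mul_neg, one_mul]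
  rw [← hmain, mul_smul_comm]


lemma star_expUnit {A : H →L[ℂ] H} (hA : IsSelfAdjoint A) (s : ℝ) :
    star (expUnit A s) = expUnit A (-s) := by
  rw [expUnit, expUnit, NormedSpace.star_exp]
  congr 1
  rw [star_smul, hA.star_eq]
  congr 1
  simp [Complex.ext_iff]

lemma norm_expUnit [Nontrivial H] {A : H →L[ℂ] H} (hA : IsSelfAdjoint A) (s : ℝ) :
    ‖expUnit A s‖ = 1 := by
  have : Nontrivial (H →L[ℂ] H) := by
    obtain ⟨x, hx⟩ := exists_ne (0 : H)
    exact ⟨1, 0, fun h => hx (by simpa using DFunLike.congr_fun h x)⟩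
  refine CStarRing.norm_of_mem_unitary ?_
  rw [Unitary.mem_iff]
  constructor
  · rw [star_expUnit hA]; exact expUnit_neg_mul A s
  · rw [star_expUnit hA]; exact expUnit_mul_neg A s

private def commSubgroup (A B : H →L[ℂ] H) : AddSubgroup ℝ where
  carrier := {s : ℝ | B * expUnit A s = expUnit A s * B}
  zero_mem' := by simp [Set.mem_setOf_eq, expUnit_zero]
  add_mem' := by
    intro a b ha hb
    simp only [Set.mem_setOf_eq] at ha hb ⊢
    rw [expUnit_add, ← mul_assoc, ha, mul_assoc, hb, ← mul_assoc]
  neg_mem' := by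
    intro a ha
    simp only [Set.mem_setOf_eq] at ha ⊢
    have h := congrArg (fun X => expUnit A (-a) * X * expUnit A (-a)) ha
    have hl : expUnit A (-a) * (B * expUnit A a) * expUnit A (-a) = expUnit A (-a) * B := by
      rw [mul_assoc, mul_assoc, expUnit_mul_neg, mul_one]
    have hr : expUnit A (-a) * (expUnit A a * B) * expUnit A (-a) = B * expUnit A (-a) := by
      rw [← mul_assoc, expUnit_neg_mul, one_mul]
    rw [hl, hr] at h
    exact h.symm

lemma null_noncommute (A B : H →L[ℂ] H) (hD : B * A - A * B ≠ 0) :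
    (volume : Measure ℝ) {s : ℝ | B * expUnit A s = expUnit A s * B} = 0 := by
  rcases (commSubgroup A B).dense_or_cyclic with hdense | ⟨a, ha⟩
  · exfalso
    have hclosed : IsClosed ((commSubgroup A B : AddSubgroup ℝ) : Set ℝ) :=
      isClosed_eq (continuous_const.mul (expUnit_continuous A))
        ((expUnit_continuous A).mul continuous_const)
    have huniv : ((commSubgroup A B : AddSubgroup ℝ) : Set ℝ) = Set.univ := by
      rw [← hclosed.closure_eq, hdense.closure_eq]
    have hall : ∀ s : ℝ, B * expUnit A s = expUnit A s * B := fun s =>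
      Set.eq_univ_iff_forall.mp huniv s
    have hfe : (fun s : ℝ => B * expUnit A s) = fun s : ℝ => expUnit A s * B :=
      funext hall
    have d1 : HasDerivAt (fun s : ℝ => B * expUnit A s)
        (B * (expUnit A 0 * (Complex.I • A))) 0 :=
      (expUnit_hasDerivAt A 0).const_mul B
    have d2 : HasDerivAt (fun s : ℝ => expUnit A s * B)
        ((expUnit A 0 * (Complex.I • A)) * B) 0 :=
      (expUnit_hasDerivAt A 0).mul_const B
    rw [← hfe] at d2
    have huniq := d1.unique d2
    rw [expUnit_zero, one_mul] at huniq
    rw [mul_smul_comm, smul_mul_assoc] at huniq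
    have heq := smul_right_injective (H →L[ℂ] H) Complex.I_ne_zero huniq
    exact hD (sub_eq_zero.mpr heq)
  · have hsub : ((commSubgroup A B : AddSubgroup ℝ) : Set ℝ) ⊆
        Set.range (fun n : ℤ => n • a) := by
      intro x hx
      rw [ha] at hx
      obtain ⟨n, hn⟩ := AddSubgroup.mem_closure_singleton.mp hx
      exact ⟨n, hn⟩
    exact measure_mono_null hsub ((Set.countable_range _).measure_zero _)

lemma extraction {M : ℝ → (H →L[ℂ] H)} {g : ℝ → ℂ}
    (hM : Continuous M) (hZ : (volume : Measure ℝ) {s : ℝ | M s = 0} = 0)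
    (hFm : AEStronglyMeasurable (fun s => g s • M s) (volume : Measure ℝ)) :
    AEStronglyMeasurable g (volume : Measure ℝ) := by
  have hMv : ∀ v : H, Continuous fun s => M s v :=
    fun v => (ContinuousLinearMap.apply ℂ H v).continuous.comp hM
  have hU : ∀ v : H, IsOpen {s : ℝ | M s v ≠ 0} := fun v =>
    isOpen_compl_singleton.preimage (hMv v)
  obtain ⟨T, hTc, hTU⟩ := TopologicalSpace.isOpen_iUnion_countable
      (fun v : H => {s : ℝ | M s v ≠ 0}) hU
  have hcov : (⋃ v : H, {s : ℝ | M s v ≠ 0}) = {s : ℝ | M s = 0}ᶜ := by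
    ext s
    simp only [Set.mem_iUnion, Set.mem_setOf_eq, Set.mem_compl_iff]
    constructor
    · rintro ⟨v, hv⟩ h0
      exact hv (by rw [h0]; simp)
    · intro h0
      by_contra hall
      push_neg at hall
      exact h0 (ContinuousLinearMap.ext fun v => by simpa using hall v)
  haveI : Countable ↥T := hTc.to_subtype
  have hae : ∀ v : H, AEMeasurable g (volume.restrict {s : ℝ | M s v ≠ 0}) := by
    intro v
    have hnum : AEMeasurable
        (fun s : ℝ => (inner ℂ (M s v) ((g s • M s) v) : ℂ)) volume :=
      ((hMv v).aestronglyMeasurable.inner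
        (hFm.apply_continuousLinearMap v)).aemeasurable
    have hden : AEMeasurable (fun s : ℝ => (((‖M s v‖ : ℂ)) ^ 2)⁻¹) volume := by
      apply AEMeasurable.inv
      exact (((Complex.continuous_ofReal.comp (hMv v).norm).pow 2)).aemeasurable
    have hq := hnum.mul hden
    refine (hq.restrict (s := {s : ℝ | M s v ≠ 0})).congr ?_
    refine (ae_restrict_iff' (hU v).measurableSet).mpr
      (Filter.Eventually.of_forall fun s hs => ?_)
    have hs0 : M s v ≠ 0 := hs
    have hne : ((‖M s v‖ : ℂ)) ^ 2 ≠ 0 :=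
      pow_ne_zero 2 (Complex.ofReal_ne_zero.mpr (norm_ne_zero_iff.mpr hs0))
    simp only [ContinuousLinearMap.smul_apply, Pi.mul_apply]
    rw [inner_smul_right, inner_self_eq_norm_sq_to_K]
    field_simp
    exact mul_div_cancel_right₀ _ hne
  have hUnion : AEMeasurable g
      (volume.restrict (⋃ v : T, {s : ℝ | M s (v : H) ≠ 0})) := by
    rw [aemeasurable_iUnion_iff]
    exact fun v => hae v
  have hTUeq : (⋃ v : T, {s : ℝ | M s (v : H) ≠ 0}) = {s : ℝ | M s = 0}ᶜ := by
    rw [← hcov, ← hTU]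
    exact (Set.biUnion_eq_iUnion T _).symm ▸ rfl
  rw [hTUeq] at hUnion
  have hres : volume.restrict ({s : ℝ | M s = 0}ᶜ) = volume :=
    Measure.restrict_eq_self_of_ae_mem (measure_eq_zero_iff_ae_notMem.mp hZ)
  rw [hres] at hUnion
  exact hUnion.aestronglyMeasurable

end AuxLemmas

/-- Integral formula for the commutator with a function of a self-adjoint operator:
`B∘T − T∘B = i·∫ g(s)·e^{isA}∘(∫₀^s e^{−iuA}∘(BA − AB)∘e^{iuA} du) ds`,
where `T = ∫ g(s)e^{isA} ds`. -/
theorem commutator_integral_formula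
    {H : Type*} [NormedAddCommGroup H] [InnerProductSpace ℂ H] [CompleteSpace H]
    (A B : H →L[ℂ] H) (hA : IsSelfAdjoint A)
    (g : ℝ → ℂ) (hg : Integrable fun s : ℝ => ‖g s‖ * (1 + |s|)) :
    B * (∫ s : ℝ, g s • expUnit A s) - (∫ s : ℝ, g s • expUnit A s) * B =
      Complex.I • ∫ s : ℝ, g s •
        (expUnit A s * ∫ u in (0 : ℝ)..s, expUnit A (-u) * (B * A - A * B) * expUnit A u) := by
  haveI : SecondCountableTopologyEither ℝ (H →L[ℂ] H) := ⟨Or.inl inferInstance⟩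
  rcases subsingleton_or_nontrivial H with hH | hH
  · apply Subsingleton.elim
  by_cases hf : Integrable (fun s : ℝ => g s • expUnit A s) volume
  · have hL : (∫ s : ℝ, B * (g s • expUnit A s)) = B * ∫ s : ℝ, g s • expUnit A s := by
      have h := ContinuousLinearMap.integral_comp_comm
        (ContinuousLinearMap.mul ℂ (H →L[ℂ] H) B) hf
      simpa only [ContinuousLinearMap.mul_apply'] using h
    have hR : (∫ s : ℝ, (g s • expUnit A s) * B) = (∫ s : ℝ, g s • expUnit A s) * B := by
      have h := ContinuousLinearMap.integral_comp_comm
        ((ContinuousLinearMap.mul ℂ (H →L[ℂ] H)).flip B) hf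
      simpa only [ContinuousLinearMap.flip_apply, ContinuousLinearMap.mul_apply'] using h
    have h1 : Integrable (fun s : ℝ => B * (g s • expUnit A s)) volume := by
      have := (ContinuousLinearMap.mul ℂ (H →L[ℂ] H) B).integrable_comp hf
      simpa only [ContinuousLinearMap.mul_apply'] using this
    have h2 : Integrable (fun s : ℝ => (g s • expUnit A s) * B) volume := by
      have := ((ContinuousLinearMap.mul ℂ (H →L[ℂ] H)).flip B).integrable_comp hf
      simpa only [ContinuousLinearMap.flip_apply, ContinuousLinearMap.mul_apply'] using this
    rw [← hL, ← hR, ← integral_sub h1 h2, ← integral_smul]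
    refine integral_congr_ae (Filter.Eventually.of_forall fun s => ?_)
    beta_reduce
    rw [mul_smul_comm, smul_mul_assoc, ← smul_sub, key_comm A B s, smul_comm]
  · rw [integral_undef hf, mul_zero, zero_mul, sub_zero]
    by_cases hD : B * A - A * B = 0
    · simp only [hD, mul_zero, zero_mul, intervalIntegral.integral_zero, smul_zero,
        integral_zero]
    · have hMcont : Continuous (fun s : ℝ => expUnit A s *
          ∫ u in (0:ℝ)..s, expUnit A (-u) * (B * A - A * B) * expUnit A u) := by
        have hfe : (fun s : ℝ => expUnit A s *
            ∫ u in (0:ℝ)..s, expUnit A (-u) * (B * A - A * B) * expUnit A u)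
            = fun s : ℝ => (-Complex.I) • (B * expUnit A s - expUnit A s * B) := by
          funext s
          rw [key_comm A B s, smul_smul]
          norm_num [Complex.I_mul_I]
        rw [hfe]
        exact ((continuous_const.mul (expUnit_continuous A)).sub
          ((expUnit_continuous A).mul continuous_const)).fun_const_smul _
      have hZeq : {s : ℝ | (expUnit A s *
            ∫ u in (0:ℝ)..s, expUnit A (-u) * (B * A - A * B) * expUnit A u) = 0}
          = {s : ℝ | B * expUnit A s = expUnit A s * B} := by
        ext s
        simp only [Set.mem_setOf_eq]
        constructor
        · intro h
          have hk := key_comm A B s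
          rw [h, smul_zero] at hk
          exact sub_eq_zero.mp hk
        · intro h
          have hk := key_comm A B s
          rw [sub_eq_zero.mpr h] at hk
          rcases (smul_eq_zero.mp hk.symm) with h' | h'
          · exact absurd h' Complex.I_ne_zero
          · exact h'
      have hFnot : ¬ Integrable (fun s : ℝ => g s • (expUnit A s *
          ∫ u in (0:ℝ)..s, expUnit A (-u) * (B * A - A * B) * expUnit A u)) volume := by
        intro hFi
        apply hf
        have hgm : AEStronglyMeasurable g (volume : Measure ℝ) :=
          extraction hMcont (by rw [hZeq]; exact null_noncommute A B hD)
            hFi.aestronglyMeasurable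
        refine Integrable.mono' hg
          (hgm.smul (expUnit_continuous A).aestronglyMeasurable) ?_
        filter_upwards with s
        rw [norm_smul, norm_expUnit hA, mul_one]
        refine le_mul_of_one_le_right (norm_nonneg _) ?_
        have := abs_nonneg s
        linarith
      rw [integral_undef hFnot, smul_zero]
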